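/- Mean-zero property of the influence function of ψ_t (Theorem 1, population form): fix an integer t ≥ 1, adopt the core setup with horizon t, and let Y₀, Y₁, …, Y_t be integrable random variables. Then E_P[ Y₀ + Σ_{k=1}^t ( {Σ_{m=1}^k 1_{B_m} g_m^{−1}(Q^{k,k,m+1} − Q^{k,k,m}) + Q^{k,k,1}} − {Σ_{m=1}^k 1_{B_m} g_m^{−1}(Q^{k−1,k,m+1} − Q^{k−1,k,m}) + Q^{k−1,k,1}} ) ] = ψ_t, where ψ_t := E_P[Y₀] + Σ_{k=1}^t (φ_{k,k} − φ_{k−1,k}); equivalently, IF(ψ_t) = IF(E[Y₀]) + Σ_{k=1}^t (IF(φ_{k,k}) − IF(φ_{k−1,k})) has mean zero under P. The conclusion holds for any choice of versions in the conditional-expectation recursions. -/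

import Mathlib

open MeasureTheory ProbabilityTheory
open scoped ENNReal

section Aux

lemma aux_cond_def {Ω : Type*} [MeasurableSpace Ω] (P : Measure Ω) (s : Set Ω) :
    P[|s] = (P s)⁻¹ • P.restrict s := rfl

lemma aux_cond_eq_self {Ω : Type*} [MeasurableSpace Ω] (P : Measure Ω)
    [IsProbabilityMeasure P] {s : Set Ω}
    (hs : MeasurableSet s) (h1 : P s = 1) : P[|s] = P := by
  have hae : ∀ᵐ x ∂P, x ∈ s := by
    rw [ae_iff]
    have h : {x | ¬ x ∈ s} = sᶜ := rfl
    rw [h, measure_compl hs (measure_ne_top _ _), h1, measure_univ, tsub_self]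
  rw [aux_cond_def, h1, inv_one, one_smul,
    Measure.restrict_eq_self_of_ae_mem hae]

lemma aux_measure_le {Ω : Type*} {m0 : MeasurableSpace Ω} [inst : MeasurableSpace Ω]
    (ν : Measure Ω) [IsProbabilityMeasure ν]
    (hm : m0 ≤ inst) {A : Set Ω} (hA : MeasurableSet[inst] A)
    {pp : Ω → ℝ} {ε : ℝ} (hε : 0 < ε)
    (hver : pp =ᵐ[ν] (ν[A.indicator (fun _ => (1:ℝ))|m0]))
    (hpos : ∀ᵐ ω ∂ν, ε ≤ pp ω)
    {N : Set Ω} (hN : MeasurableSet[m0] N) :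
    ν N ≤ ENNReal.ofReal ε⁻¹ * ν (N ∩ A) := by
  have hint : Integrable (A.indicator fun _ => (1:ℝ)) ν :=
    (integrable_const (1:ℝ)).indicator hA
  have hppint : Integrable pp ν := integrable_condExp.congr hver.symm
  have h1 : ∫ ω in N, pp ω ∂ν = (ν (N ∩ A)).toReal := by
    rw [setIntegral_congr_ae (hm N hN) (hver.mono fun x hx _ => hx),
      setIntegral_condExp hm hint hN, setIntegral_indicator hA, setIntegral_const]
    simp
    rfl
  have h2 : ε * (ν N).toReal ≤ ∫ ω in N, pp ω ∂ν := by
    have hc : ∫ _ω in N, ε ∂ν = (ν N).toReal * ε := by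
      rw [setIntegral_const, smul_eq_mul]; rfl
    calc ε * (ν N).toReal = ∫ _ω in N, ε ∂ν := by rw [hc]; ring
      _ ≤ ∫ ω in N, pp ω ∂ν :=
        setIntegral_mono_ae (integrable_const ε).integrableOn hppint.integrableOn hpos
  have h3 : ε * (ν N).toReal ≤ (ν (N ∩ A)).toReal := h1 ▸ h2
  have h4 : (ν N).toReal ≤ ε⁻¹ * (ν (N ∩ A)).toReal := by
    calc (ν N).toReal = ε⁻¹ * (ε * (ν N).toReal) := by field_simp
      _ ≤ ε⁻¹ * (ν (N ∩ A)).toReal :=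
        mul_le_mul_of_nonneg_left h3 (inv_nonneg.mpr hε.le)
  calc ν N = ENNReal.ofReal ((ν N).toReal) := (ENNReal.ofReal_toReal (measure_ne_top _ _)).symm
    _ ≤ ENNReal.ofReal (ε⁻¹ * (ν (N ∩ A)).toReal) := ENNReal.ofReal_le_ofReal h4
    _ = ENNReal.ofReal ε⁻¹ * ENNReal.ofReal ((ν (N ∩ A)).toReal) :=
        ENNReal.ofReal_mul (inv_nonneg.mpr hε.le)
    _ = ENNReal.ofReal ε⁻¹ * ν (N ∩ A) := by
        rw [ENNReal.ofReal_toReal (measure_ne_top _ _)]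

lemma aux_integrable_of_le {Ω : Type*} {m0 : MeasurableSpace Ω} [inst : MeasurableSpace Ω]
    (hm : m0 ≤ inst)
    (ν₁ ν₂ : Measure Ω) [IsFiniteMeasure ν₂] {C : ℝ≥0∞} (hC : C ≠ ⊤)
    (hle : ∀ N, MeasurableSet[m0] N → ν₁ N ≤ C * ν₂ N)
    {f : Ω → ℝ} (hf : Measurable[m0] f) (hint : Integrable f ν₂) :
    Integrable f ν₁ := by
  refine ⟨(Measurable.le hm hf).aestronglyMeasurable, ?_⟩
  have hmeas : Measurable[m0] fun ω => (‖f ω‖₊ : ℝ≥0∞) := by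
    letI := m0; exact hf.nnnorm.coe_nnreal_ennreal
  have hletrim : ν₁.trim hm ≤ C • ν₂.trim hm := by
    refine Measure.le_iff.mpr fun s hs => ?_
    rw [Measure.smul_apply, smul_eq_mul, trim_measurableSet_eq hm hs,
      trim_measurableSet_eq hm hs]
    exact hle s hs
  have hfin : ∫⁻ ω, (‖f ω‖₊ : ℝ≥0∞) ∂ν₂ < ⊤ := hint.2
  calc ∫⁻ ω, (‖f ω‖₊ : ℝ≥0∞) ∂ν₁
      = ∫⁻ ω, (‖f ω‖₊ : ℝ≥0∞) ∂(ν₁.trim hm) := (lintegral_trim hm hmeas).symm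
    _ ≤ ∫⁻ ω, (‖f ω‖₊ : ℝ≥0∞) ∂(C • ν₂.trim hm) := lintegral_mono' hletrim le_rfl
    _ = C * ∫⁻ ω, (‖f ω‖₊ : ℝ≥0∞) ∂(ν₂.trim hm) := lintegral_smul_measure _ _
    _ = C * ∫⁻ ω, (‖f ω‖₊ : ℝ≥0∞) ∂ν₂ := by rw [lintegral_trim hm hmeas]
    _ < ⊤ := ENNReal.mul_lt_top hC.lt_top hfin

lemma aux_integral_mul_condexp {Ω : Type*} {m0 : MeasurableSpace Ω}
    [inst : MeasurableSpace Ω] (ν : Measure Ω) [IsProbabilityMeasure ν]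
    (hm : m0 ≤ inst) {h f : Ω → ℝ} {c : ℝ}
    (hh : Measurable[m0] h) (hbdd : ∀ᵐ ω ∂ν, ‖h ω‖ ≤ c) (hf : Integrable f ν) :
    ∫ ω, h ω * f ω ∂ν = ∫ ω, h ω * (ν[f|m0]) ω ∂ν := by
  have hhsm : StronglyMeasurable[m0] h := hh.stronglyMeasurable
  have hhae : AEStronglyMeasurable h ν := (Measurable.le hm hh).aestronglyMeasurable
  have hfg : Integrable (h * f) ν := hf.bdd_mul hhae hbdd
  have hpull := condExp_mul_of_stronglyMeasurable_left hhsm hfg hf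
  calc ∫ ω, h ω * f ω ∂ν = ∫ ω, (h * f) ω ∂ν := rfl
    _ = ∫ ω, (ν[h * f|m0]) ω ∂ν := (integral_condExp hm).symm
    _ = ∫ ω, (h * (ν[f|m0])) ω ∂ν := integral_congr_ae hpull
    _ = ∫ ω, h ω * (ν[f|m0]) ω ∂ν := rfl

end Aux

/-- Mean-zero property of the influence function of `ψ_t` (Theorem 1,
population form): under the core setup with horizon `t`, integrable observed outcomes
`Y 0, …, Y t`, and any choice of versions `Q j k m` in the conditional-expectation
recursions,
`E_P[ Y 0 + Σ_{k=1}^t ({Σ_{m=1}^k 1_{B m} (g m)⁻¹ (Q k k (m+1) - Q k k m) + Q k k 1}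
  - {Σ_{m=1}^k 1_{B m} (g m)⁻¹ (Q (k-1) k (m+1) - Q (k-1) k m) + Q (k-1) k 1}) ] = ψ_t`
where `ψ_t = E_P[Y 0] + Σ_{k=1}^t (φ_{k,k} - φ_{k-1,k})` and `φ_{j,k} = E_P[Q j k 1]`;
equivalently, `IF(ψ_t)` has mean zero under `P`. -/
theorem influence_function_psi_mean_zero
    {Ω : Type*} [inst : MeasurableSpace Ω] (P : Measure Ω) [IsProbabilityMeasure P]
    (t : ℕ) (ht : 1 ≤ t)
    (B : ℕ → Set Ω)
    (hBmeas : ∀ m, m ≤ t → MeasurableSet (B m))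
    (hBmono : ∀ m, m < t → B (m + 1) ⊆ B m)
    (hB0 : P (B 0) = 1)
    (hBt : 0 < P (B t))
    (𝒲 : ℕ → MeasurableSpace Ω)
    (h𝒲le : ∀ m, 1 ≤ m → m ≤ t → 𝒲 m ≤ inst)
    (h𝒲mono : ∀ m, 1 ≤ m → m < t → 𝒲 m ≤ 𝒲 (m + 1))
    (ε : ℝ) (hε : 0 < ε)
    (p : ℕ → Ω → ℝ)
    (hpmeas : ∀ m, 1 ≤ m → m ≤ t → Measurable[𝒲 m] (p m))
    (hpver : ∀ m, 1 ≤ m → m ≤ t →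
      p m =ᵐ[P[|B (m - 1)]] (P[|B (m - 1)])[(B m).indicator (fun _ => (1 : ℝ))|𝒲 m])
    (hppos : ∀ m, 1 ≤ m → m ≤ t → ∀ᵐ ω ∂P, ε ≤ p m ω)
    (g : ℕ → Ω → ℝ)
    (hg : ∀ m ω, g m ω = ∏ s ∈ Finset.Icc 1 m, p s ω)
    (Y : ℕ → Ω → ℝ)
    (hYint : ∀ s, s ≤ t → Integrable (Y s) P)
    (Q : ℕ → ℕ → ℕ → Ω → ℝ)
    (hQtop : ∀ k, 1 ≤ k → k ≤ t → ∀ j, (j = k - 1 ∨ j = k) → Q j k (k + 1) = Y j)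
    (hQmeas : ∀ k, 1 ≤ k → k ≤ t → ∀ j, (j = k - 1 ∨ j = k) →
      ∀ m, 1 ≤ m → m ≤ k → Measurable[𝒲 m] (Q j k m))
    (hQver : ∀ k, 1 ≤ k → k ≤ t → ∀ j, (j = k - 1 ∨ j = k) →
      ∀ m, 1 ≤ m → m ≤ k → Q j k m =ᵐ[P[|B m]] (P[|B m])[Q j k (m + 1)|𝒲 m])
    :
    ∫ ω, (Y 0 ω + ∑ k ∈ Finset.Icc 1 t,
        (((∑ m ∈ Finset.Icc 1 k,
            (B m).indicator (fun ω' => (g m ω')⁻¹ * (Q k k (m + 1) ω' - Q k k m ω')) ω)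
          + Q k k 1 ω)
        - ((∑ m ∈ Finset.Icc 1 k,
            (B m).indicator
              (fun ω' => (g m ω')⁻¹ * (Q (k - 1) k (m + 1) ω' - Q (k - 1) k m ω')) ω)
          + Q (k - 1) k 1 ω))) ∂P
    = (∫ ω, Y 0 ω ∂P)
      + ∑ k ∈ Finset.Icc 1 t, ((∫ ω, Q k k 1 ω ∂P) - ∫ ω, Q (k - 1) k 1 ω ∂P) := by
  classical
  -- monotonicity of the B chain
  have hBsub : ∀ a b, a ≤ b → b ≤ t → B b ⊆ B a := by
    intro a b hab hbt
    induction b with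
    | zero => have : a = 0 := by omega
              subst this; exact subset_rfl
    | succ n ih =>
      rcases Nat.lt_or_ge a (n + 1) with hlt | hge
      · exact (hBmono n (by omega)).trans (ih (by omega) (by omega))
      · have : a = n + 1 := by omega
        subst this; exact subset_rfl
  have hPBne : ∀ m, m ≤ t → P (B m) ≠ 0 := fun m hm =>
    (lt_of_lt_of_le hBt (measure_mono (hBsub m t hm le_rfl))).ne'
  have hPBtop : ∀ m, P (B m) ≠ ⊤ := fun m => measure_ne_top P _
  have hprob : ∀ m, m ≤ t → IsProbabilityMeasure (P[|B m]) := fun m hm =>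
    cond_isProbabilityMeasure (hPBne m hm)
  have hcond0 : P[|B 0] = P := aux_cond_eq_self P (hBmeas 0 (by omega)) hB0
  -- 𝒲 chain
  have h𝒲chain : ∀ s m, 1 ≤ s → s ≤ m → m ≤ t → 𝒲 s ≤ 𝒲 m := by
    intro s m h1 hsm hmt
    induction m with
    | zero => omega
    | succ n ih =>
      rcases Nat.lt_or_ge s (n + 1) with hlt | hge
      · exact (ih (by omega) (by omega)).trans (h𝒲mono n (by omega) (by omega))
      · have : s = n + 1 := by omega
        subst this; exact le_rfl
  -- g : measurability and a.e. bounds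
  have hgmeas : ∀ m, 1 ≤ m → m ≤ t → Measurable[𝒲 m] (g m) := by
    intro m h1 hmt
    have hgfun : g m = fun ω => ∏ s ∈ Finset.Icc 1 m, p s ω := funext fun ω => hg m ω
    rw [hgfun]
    refine Finset.measurable_prod _ fun s hs => ?_
    rcases Finset.mem_Icc.mp hs with ⟨hs1, hs2⟩
    exact (hpmeas s hs1 (hs2.trans hmt)).mono (h𝒲chain s m hs1 hs2 hmt) le_rfl
  have hginv : ∀ m, 1 ≤ m → m ≤ t → ∀ᵐ ω ∂P, ‖(g m ω)⁻¹‖ ≤ (ε ^ m)⁻¹ := by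
    intro m h1 hmt
    have hall : ∀ᵐ ω ∂P, ∀ s ∈ Finset.Icc 1 m, ε ≤ p s ω :=
      (Filter.eventually_all_finset _).mpr fun s hs =>
        hppos s (Finset.mem_Icc.mp hs).1 ((Finset.mem_Icc.mp hs).2.trans hmt)
    filter_upwards [hall] with ω hω
    have hgl : ε ^ m ≤ g m ω := by
      rw [hg]
      calc ε ^ m = ∏ _s ∈ Finset.Icc 1 m, ε := by
            rw [Finset.prod_const, Nat.card_Icc, Nat.add_sub_cancel]
        _ ≤ ∏ s ∈ Finset.Icc 1 m, p s ω :=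
            Finset.prod_le_prod (fun _ _ => hε.le) hω
    have hgpos : 0 < g m ω := lt_of_lt_of_le (pow_pos hε m) hgl
    rw [Real.norm_eq_abs, abs_of_nonneg (inv_nonneg.mpr hgpos.le)]
    exact inv_anti₀ (pow_pos hε m) hgl
  -- measure comparison between consecutive conditional measures on 𝒲 m sets
  have hdom : ∀ m, 1 ≤ m → m ≤ t → ∀ N, MeasurableSet[𝒲 m] N →
      (P[|B (m - 1)]) N ≤
        (ENNReal.ofReal ε⁻¹ * ((P (B (m - 1)))⁻¹ * P (B m))) * (P[|B m]) N := by
    intro m h1 hmt N hN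
    haveI := hprob (m - 1) (by omega)
    have hstep := aux_measure_le (P[|B (m - 1)]) (h𝒲le m h1 hmt) (hBmeas m hmt) hε
      (hpver m h1 hmt)
      ((hppos m h1 hmt).filter_mono cond_absolutelyContinuous.ae_le) hN
    have hBm1 : B m ⊆ B (m - 1) := hBsub (m - 1) m (by omega) hmt
    have hseteq : B (m - 1) ∩ (N ∩ B m) = B m ∩ N := by
      ext x
      constructor
      · rintro ⟨_, hxN, hxm⟩; exact ⟨hxm, hxN⟩
      · rintro ⟨hxm, hxN⟩; exact ⟨hBm1 hxm, hxN, hxm⟩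
    have hNA : (P[|B (m - 1)]) (N ∩ B m) = (P (B (m - 1)))⁻¹ * P (B m ∩ N) := by
      rw [cond_apply (hBmeas (m - 1) (by omega)), hseteq]
    have hPBm : P (B m ∩ N) = P (B m) * (P[|B m]) N := by
      rw [cond_apply (hBmeas m hmt), ← mul_assoc,
        ENNReal.mul_inv_cancel (hPBne m hmt) (hPBtop m), one_mul]
    calc (P[|B (m - 1)]) N
        ≤ ENNReal.ofReal ε⁻¹ * (P[|B (m - 1)]) (N ∩ B m) := hstep
      _ = ENNReal.ofReal ε⁻¹ * ((P (B (m - 1)))⁻¹ * (P (B m) * (P[|B m]) N)) := by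
          rw [hNA, hPBm]
      _ = (ENNReal.ofReal ε⁻¹ * ((P (B (m - 1)))⁻¹ * P (B m))) * (P[|B m]) N := by ring
  have hCtop : ∀ m, 1 ≤ m → m ≤ t →
      (ENNReal.ofReal ε⁻¹ * ((P (B (m - 1)))⁻¹ * P (B m))) ≠ ⊤ := fun m h1 hmt =>
    ENNReal.mul_ne_top ENNReal.ofReal_ne_top
      (ENNReal.mul_ne_top (ENNReal.inv_ne_top.mpr (hPBne (m - 1) (by omega))) (hPBtop m))
  -- main per-(j,k) facts
  have main : ∀ k, 1 ≤ k → k ≤ t → ∀ j, (j = k - 1 ∨ j = k) →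
      Integrable (Q j k 1) P ∧
      ∀ m, 1 ≤ m → m ≤ k →
        Integrable ((B m).indicator
          (fun ω' => (g m ω')⁻¹ * (Q j k (m + 1) ω' - Q j k m ω'))) P ∧
        ∫ ω, (B m).indicator
          (fun ω' => (g m ω')⁻¹ * (Q j k (m + 1) ω' - Q j k m ω')) ω ∂P = 0 := by
    intro k hk1 hkt j hj
    have hjt : j ≤ t := by rcases hj with h | h <;> omega
    have hbase : Integrable (Q j k (k + 1)) (P[|B (k + 1 - 1)]) := by
      rw [hQtop k hk1 hkt j hj, aux_cond_def]
      exact ((hYint j hjt).restrict).smul_measure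
        (ENNReal.inv_ne_top.mpr (hPBne (k + 1 - 1) (by omega)))
    have hIa : ∀ d m, 1 ≤ m → m ≤ k + 1 → k + 1 ≤ m + d →
        Integrable (Q j k m) (P[|B (m - 1)]) := by
      intro d
      induction d with
      | zero =>
        intro m h1 h2 h3
        have hm : m = k + 1 := by omega
        subst hm; exact hbase
      | succ d ih =>
        intro m h1 h2 h3
        by_cases hm : m = k + 1
        · subst hm; exact hbase
        · have hmk : m ≤ k := by omega
          have hmt : m ≤ t := hmk.trans hkt
          haveI := hprob m hmt
          have hnext : Integrable (Q j k (m + 1)) (P[|B m]) := by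
            have h' := ih (m + 1) (by omega) (by omega) (by omega)
            simpa using h'
          have hQm : Integrable (Q j k m) (P[|B m]) :=
            integrable_condExp.congr (hQver k hk1 hkt j hj m h1 hmk).symm
          exact aux_integrable_of_le (h𝒲le m h1 hmt) (P[|B (m - 1)]) (P[|B m])
            (hCtop m h1 hmt) (hdom m h1 hmt)
            (hQmeas k hk1 hkt j hj m h1 hmk) hQm
    have hI1 : Integrable (Q j k 1) P := by
      have h' := hIa (k + 1) 1 le_rfl (by omega) (by omega)
      rwa [show (1 : ℕ) - 1 = 0 from rfl, hcond0] at h'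
    refine ⟨hI1, ?_⟩
    intro m h1 hmk
    have hmt : m ≤ t := hmk.trans hkt
    haveI := hprob m hmt
    have hQm1int : Integrable (Q j k (m + 1)) (P[|B m]) := by
      have h' := hIa (k + 1) (m + 1) (by omega) (by omega) (by omega)
      simpa using h'
    have hQmint : Integrable (Q j k m) (P[|B m]) :=
      integrable_condExp.congr (hQver k hk1 hkt j hj m h1 hmk).symm
    have hgae : ∀ᵐ ω ∂(P[|B m]), ‖(g m ω)⁻¹‖ ≤ (ε ^ m)⁻¹ :=
      (hginv m h1 hmt).filter_mono cond_absolutelyContinuous.ae_le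
    have hgmeas' : Measurable[𝒲 m] fun ω => (g m ω)⁻¹ := (hgmeas m h1 hmt).inv
    have hgaesm : AEStronglyMeasurable (fun ω => (g m ω)⁻¹) (P[|B m]) :=
      (Measurable.le (h𝒲le m h1 hmt) hgmeas').aestronglyMeasurable
    set f : Ω → ℝ := fun ω' => (g m ω')⁻¹ * (Q j k (m + 1) ω' - Q j k m ω') with hf_def
    have hfint : Integrable f (P[|B m]) :=
      (hQm1int.sub hQmint).bdd_mul hgaesm hgae
    have hzero : ∫ ω, f ω ∂(P[|B m]) = 0 := by
      have hsplit : ∫ ω, f ω ∂(P[|B m]) =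
          (∫ ω, (g m ω)⁻¹ * Q j k (m + 1) ω ∂(P[|B m]))
          - ∫ ω, (g m ω)⁻¹ * Q j k m ω ∂(P[|B m]) := by
        rw [← integral_sub (hQm1int.bdd_mul hgaesm hgae) (hQmint.bdd_mul hgaesm hgae)]
        refine integral_congr_ae (Filter.Eventually.of_forall fun ω => ?_)
        simp only [hf_def]; ring
      have h1' : ∫ ω, (g m ω)⁻¹ * Q j k (m + 1) ω ∂(P[|B m]) =
          ∫ ω, (g m ω)⁻¹ * ((P[|B m])[Q j k (m + 1)|𝒲 m]) ω ∂(P[|B m]) :=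
        aux_integral_mul_condexp (P[|B m]) (h𝒲le m h1 hmt) hgmeas' hgae hQm1int
      have h2' : ∫ ω, (g m ω)⁻¹ * Q j k m ω ∂(P[|B m]) =
          ∫ ω, (g m ω)⁻¹ * ((P[|B m])[Q j k (m + 1)|𝒲 m]) ω ∂(P[|B m]) :=
        integral_congr_ae ((hQver k hk1 hkt j hj m h1 hmk).mono fun ω hω => by dsimp only; rw [hω])
      rw [hsplit, h1', h2', sub_self]
    have hrestrict : P.restrict (B m) = (P (B m)) • (P[|B m]) := by
      rw [aux_cond_def, smul_smul,
        ENNReal.mul_inv_cancel (hPBne m hmt) (hPBtop m), one_smul]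
    have hindint : Integrable ((B m).indicator f) P := by
      rw [integrable_indicator_iff (hBmeas m hmt)]
      show Integrable f (P.restrict (B m))
      rw [hrestrict]
      exact hfint.smul_measure (hPBtop m)
    refine ⟨hindint, ?_⟩
    rw [integral_indicator (hBmeas m hmt)]
    have hres : ∫ ω in B m, f ω ∂P = (P (B m)).toReal • ∫ ω, f ω ∂(P[|B m]) := by
      show ∫ ω, f ω ∂(P.restrict (B m)) = _
      rw [hrestrict, integral_smul_measure]
    rw [hres, hzero, smul_zero]
  -- assemble
  have hterm : ∀ k ∈ Finset.Icc 1 t, Integrable (fun ω =>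
      ((∑ m ∈ Finset.Icc 1 k,
          (B m).indicator (fun ω' => (g m ω')⁻¹ * (Q k k (m + 1) ω' - Q k k m ω')) ω)
        + Q k k 1 ω)
      - ((∑ m ∈ Finset.Icc 1 k,
          (B m).indicator
            (fun ω' => (g m ω')⁻¹ * (Q (k - 1) k (m + 1) ω' - Q (k - 1) k m ω')) ω)
        + Q (k - 1) k 1 ω)) P := by
    intro k hk
    rcases Finset.mem_Icc.mp hk with ⟨hk1, hkt⟩
    have hA := main k hk1 hkt k (Or.inr rfl)
    have hB' := main k hk1 hkt (k - 1) (Or.inl rfl)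
    refine Integrable.sub (Integrable.add ?_ hA.1) (Integrable.add ?_ hB'.1)
    · exact integrable_finset_sum _ fun m hm =>
        (hA.2 m (Finset.mem_Icc.mp hm).1 (Finset.mem_Icc.mp hm).2).1
    · exact integrable_finset_sum _ fun m hm =>
        (hB'.2 m (Finset.mem_Icc.mp hm).1 (Finset.mem_Icc.mp hm).2).1
  rw [integral_add (hYint 0 (by omega)) (integrable_finset_sum _ hterm)]
  congr 1
  rw [integral_finset_sum _ hterm]
  refine Finset.sum_congr rfl fun k hk => ?_
  rcases Finset.mem_Icc.mp hk with ⟨hk1, hkt⟩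
  have hA := main k hk1 hkt k (Or.inr rfl)
  have hB' := main k hk1 hkt (k - 1) (Or.inl rfl)
  have hsum1 : Integrable (fun ω => ∑ m ∈ Finset.Icc 1 k,
      (B m).indicator (fun ω' => (g m ω')⁻¹ * (Q k k (m + 1) ω' - Q k k m ω')) ω) P :=
    integrable_finset_sum _ fun m hm =>
      (hA.2 m (Finset.mem_Icc.mp hm).1 (Finset.mem_Icc.mp hm).2).1
  have hsum2 : Integrable (fun ω => ∑ m ∈ Finset.Icc 1 k,
      (B m).indicator
        (fun ω' => (g m ω')⁻¹ * (Q (k - 1) k (m + 1) ω' - Q (k - 1) k m ω')) ω) P :=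
    integrable_finset_sum _ fun m hm =>
      (hB'.2 m (Finset.mem_Icc.mp hm).1 (Finset.mem_Icc.mp hm).2).1
  have hint1 : Integrable (fun ω => (∑ m ∈ Finset.Icc 1 k,
      (B m).indicator (fun ω' => (g m ω')⁻¹ * (Q k k (m + 1) ω' - Q k k m ω')) ω)
      + Q k k 1 ω) P := hsum1.add hA.1
  have hint2 : Integrable (fun ω => (∑ m ∈ Finset.Icc 1 k,
      (B m).indicator
        (fun ω' => (g m ω')⁻¹ * (Q (k - 1) k (m + 1) ω' - Q (k - 1) k m ω')) ω)
      + Q (k - 1) k 1 ω) P := hsum2.add hB'.1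
  rw [integral_sub hint1 hint2,
    integral_add hsum1 hA.1, integral_add hsum2 hB'.1,
    integral_finset_sum _ (fun m hm =>
      (hA.2 m (Finset.mem_Icc.mp hm).1 (Finset.mem_Icc.mp hm).2).1),
    integral_finset_sum _ (fun m hm =>
      (hB'.2 m (Finset.mem_Icc.mp hm).1 (Finset.mem_Icc.mp hm).2).1)]
  rw [Finset.sum_eq_zero (fun m hm =>
      (hA.2 m (Finset.mem_Icc.mp hm).1 (Finset.mem_Icc.mp hm).2).2),
    Finset.sum_eq_zero (fun m hm =>
      (hB'.2 m (Finset.mem_Icc.mp hm).1 (Finset.mem_Icc.mp hm).2).2),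
    zero_add, zero_add]
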